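/- Let M = L* + S* where, for the iterate pair produced by one full iteration of IRPCA-IHT (entrywise hard thresholding at level ζ_t = μ²σ_max(F)²(d/n)c_W/5^{t−1} followed by spectral hard thresholding through the feature map): if ‖L* − L_{t−1}‖∞ ≤ ζ_t then ‖L* − L_t‖∞ ≤ ζ_t/5 = ζ_{t+1}, assuming L* = FᵀW*F with W* symmetric of rank r and ‖W*‖₂ ≤ c_W, F full row rank with incoherence constant μ and condition number κ, and S* having at most z ≤ n/(20μ²dκ²) nonzeros per row and column. Consequently by induction ‖L* − L_T‖∞ ≤ ε and ‖S* − S_T‖∞ ≤ ε for T > ⌈log₅(2μ²σ_max(F)²(d/n)c_W/ε)⌉ + 1. -/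

import Mathlib

open Matrix

noncomputable def specNorm {m n : Type*} [Fintype m] [Fintype n] [DecidableEq n]
    (A : Matrix m n ℝ) : ℝ :=
  ‖LinearMap.toContinuousLinearMap (Matrix.toEuclideanLin A)‖

noncomputable def infNorm {m n : Type*} [Fintype m] [Fintype n] (A : Matrix m n ℝ) : ℝ :=
  ⨆ i, ⨆ j, |A i j|

noncomputable def nnzRow {m n : Type*} [Fintype n] (A : Matrix m n ℝ) (i : m) : ℕ :=
  (Finset.univ.filter fun j => A i j ≠ 0).card

noncomputable def nnzCol {m n : Type*} [Fintype m] (A : Matrix m n ℝ) (j : n) : ℕ :=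
  (Finset.univ.filter fun i => A i j ≠ 0).card

noncomputable def hardThresh {m n : Type*} (a : ℝ) (A : Matrix m n ℝ) : Matrix m n ℝ :=
  Matrix.of fun i j => if a < |A i j| then A i j else 0

noncomputable def sigmaMin {d n : Type*} [Fintype d] [Fintype n] [DecidableEq d]
    (F : Matrix d n ℝ) : ℝ :=
  sInf ((fun y : EuclideanSpace ℝ d => ‖Matrix.toEuclideanLin Fᵀ y‖) '' {y | ‖y‖ = 1})

noncomputable def pinv {d n : Type*} [Fintype d] [Fintype n] [DecidableEq d]
    (F : Matrix d n ℝ) : Matrix n d ℝ :=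
  Fᵀ * (F * Fᵀ)⁻¹

def IsTruncatedEigen {d : ℕ} (r : ℕ) (A B : Matrix (Fin d) (Fin d) ℝ) : Prop :=
  ∃ (Q : Matrix (Fin d) (Fin r) ℝ) (Λ : Fin r → ℝ)
    (Qp : Matrix (Fin d) (Fin (d - r)) ℝ) (Λp : Fin (d - r) → ℝ),
    Qᵀ * Q = 1 ∧ Qpᵀ * Qp = 1 ∧ Qᵀ * Qp = 0 ∧
    A = Q * Matrix.diagonal Λ * Qᵀ + Qp * Matrix.diagonal Λp * Qpᵀ ∧
    B = Q * Matrix.diagonal Λ * Qᵀ ∧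
    ∀ i j, |Λp j| ≤ |Λ i|

def symEmb {n₁ n₂ : Type*} (M : Matrix n₁ n₂ ℝ) : Matrix (n₁ ⊕ n₂) (n₁ ⊕ n₂) ℝ :=
  Matrix.fromBlocks 0 M Mᵀ 0


section Sums
variable {m a b : Type*} [Fintype m] [Fintype a] [Fintype b]

lemma sum_mulVec_mulVec (M : Matrix m a ℝ) (N : Matrix m b ℝ) (y : a → ℝ) (z : b → ℝ) :
    ∑ i, M.mulVec y i * N.mulVec z i = ∑ p, ∑ q, y p * ((Mᵀ * N) p q * z q) := by
  calc ∑ i, M.mulVec y i * N.mulVec z i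
      = ∑ i, ∑ q, ∑ p, (M i p * y p) * (N i q * z q) := by
        simp only [mulVec, dotProduct, Finset.sum_mul, Finset.mul_sum]
    _ = ∑ q, ∑ i, ∑ p, (M i p * y p) * (N i q * z q) := Finset.sum_comm
    _ = ∑ q, ∑ p, ∑ i, (M i p * y p) * (N i q * z q) :=
        Finset.sum_congr rfl fun q _ => Finset.sum_comm
    _ = ∑ p, ∑ q, ∑ i, (M i p * y p) * (N i q * z q) := Finset.sum_comm
    _ = ∑ p, ∑ q, y p * ((Mᵀ * N) p q * z q) := by
        simp only [Matrix.mul_apply, transpose_apply, Finset.sum_mul, Finset.mul_sum]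
        exact Finset.sum_congr rfl fun p _ => Finset.sum_congr rfl fun q _ =>
          Finset.sum_congr rfl fun i _ => by ring

lemma sum_mul_mulVec (M : Matrix m a ℝ) (x : m → ℝ) (y : a → ℝ) :
    ∑ i, x i * M.mulVec y i = ∑ p, Mᵀ.mulVec x p * y p := by
  calc ∑ i, x i * M.mulVec y i
      = ∑ i, ∑ p, x i * (M i p * y p) := by
        simp only [mulVec, dotProduct, Finset.mul_sum]
    _ = ∑ p, ∑ i, x i * (M i p * y p) := Finset.sum_comm
    _ = ∑ p, Mᵀ.mulVec x p * y p := by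
        simp only [mulVec, dotProduct, transpose_apply, Finset.sum_mul]
        exact Finset.sum_congr rfl fun p _ => Finset.sum_congr rfl fun i _ => by ring

lemma sqnorm_mulVec_orth [DecidableEq a] (M : Matrix m a ℝ) (h : Mᵀ * M = 1) (y : a → ℝ) :
    ∑ i, (M.mulVec y i) ^ 2 = ∑ p, y p ^ 2 := by
  have e := sum_mulVec_mulVec M M y y
  rw [h] at e
  simp only [pow_two]
  rw [e]
  simp [Matrix.one_apply, mul_ite, mul_one, mul_zero, Finset.sum_ite_eq]

lemma sum_mulVec_orthzero (M : Matrix m a ℝ) (N : Matrix m b ℝ) (h : Mᵀ * N = 0)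
    (y : a → ℝ) (z : b → ℝ) : ∑ i, M.mulVec y i * N.mulVec z i = 0 := by
  rw [sum_mulVec_mulVec, h]
  simp

lemma sqnorm_transpose_mulVec_le [DecidableEq a] (M : Matrix m a ℝ) (h : Mᵀ * M = 1)
    (x : m → ℝ) : ∑ p, (Mᵀ.mulVec x p) ^ 2 ≤ ∑ i, x i ^ 2 := by
  set y := Mᵀ.mulVec x with hy
  have e1 : ∑ i, x i * M.mulVec y i = ∑ p, y p ^ 2 := by
    rw [sum_mul_mulVec]
    simp [pow_two, hy]
  have e2 : ∑ i, (M.mulVec y i) ^ 2 = ∑ p, y p ^ 2 := sqnorm_mulVec_orth M h y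
  have key : ∑ i, (x i - M.mulVec y i) ^ 2 = ∑ i, x i ^ 2 - ∑ p, y p ^ 2 := by
    have e3 : ∀ i, (x i - M.mulVec y i) ^ 2
        = x i ^ 2 - 2 * (x i * M.mulVec y i) + (M.mulVec y i) ^ 2 := fun i => by ring
    simp_rw [e3]
    rw [Finset.sum_add_distrib, Finset.sum_sub_distrib, ← Finset.mul_sum, e1, e2]
    ring
  have h0 : (0:ℝ) ≤ ∑ i, (x i - M.mulVec y i) ^ 2 :=
    Finset.sum_nonneg fun i _ => sq_nonneg _
  linarith

end Sums

lemma toEuclideanLin_equiv_symm_aux {m n : Type*} [Fintype m] [Fintype n] [DecidableEq n]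
    (M : Matrix m n ℝ) (v : n → ℝ) :
    Matrix.toEuclideanLin M ((WithLp.equiv 2 (n → ℝ)).symm v)
      = (WithLp.equiv 2 (m → ℝ)).symm (M *ᵥ v) := rfl

section Spec
variable {m n : Type*} [Fintype m] [Fintype n] [DecidableEq n]

lemma specNorm_nonneg (A : Matrix m n ℝ) : 0 ≤ specNorm A := norm_nonneg _

omit [DecidableEq n] in
lemma euclid_norm_eq (x : n → ℝ) :
    ‖(WithLp.equiv 2 (n → ℝ)).symm x‖ = Real.sqrt (∑ j, x j ^ 2) := by
  rw [EuclideanSpace.norm_eq]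
  congr 1
  exact Finset.sum_congr rfl fun j _ => by
    rw [show ((WithLp.equiv 2 (n → ℝ)).symm x).ofLp j = x j from rfl, Real.norm_eq_abs, sq_abs]

lemma mulVec_sqnorm_le (A : Matrix m n ℝ) (x : n → ℝ) :
    ∑ i, (A.mulVec x i) ^ 2 ≤ specNorm A ^ 2 * ∑ j, x j ^ 2 := by
  have h := (LinearMap.toContinuousLinearMap (Matrix.toEuclideanLin A)).le_opNorm
    ((WithLp.equiv 2 (n → ℝ)).symm x)
  rw [LinearMap.coe_toContinuousLinearMap'] at h
  rw [toEuclideanLin_equiv_symm_aux, euclid_norm_eq, euclid_norm_eq] at h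
  have h2 : Real.sqrt (∑ i, (A.mulVec x i) ^ 2)
      ≤ specNorm A * Real.sqrt (∑ j, x j ^ 2) := h
  have hnn : (0:ℝ) ≤ ∑ i, (A.mulVec x i) ^ 2 := Finset.sum_nonneg fun _ _ => sq_nonneg _
  have hnn2 : (0:ℝ) ≤ ∑ j, x j ^ 2 := Finset.sum_nonneg fun _ _ => sq_nonneg _
  have := mul_self_le_mul_self (Real.sqrt_nonneg _) h2
  rw [Real.mul_self_sqrt hnn] at this
  calc ∑ i, (A.mulVec x i) ^ 2
      ≤ (specNorm A * Real.sqrt (∑ j, x j ^ 2)) * (specNorm A * Real.sqrt (∑ j, x j ^ 2)) :=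
        this
    _ = specNorm A ^ 2 * (Real.sqrt (∑ j, x j ^ 2) * Real.sqrt (∑ j, x j ^ 2)) := by ring
    _ = specNorm A ^ 2 * ∑ j, x j ^ 2 := by rw [Real.mul_self_sqrt hnn2]

lemma specNorm_le_bound (A : Matrix m n ℝ) (C : ℝ) (hC : 0 ≤ C)
    (h : ∀ x : n → ℝ, ∑ i, (A.mulVec x i) ^ 2 ≤ C ^ 2 * ∑ j, x j ^ 2) :
    specNorm A ≤ C := by
  refine ContinuousLinearMap.opNorm_le_bound _ hC fun v => ?_
  set x : n → ℝ := WithLp.equiv 2 (n → ℝ) v with hx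
  have hv : v = (WithLp.equiv 2 (n → ℝ)).symm x := rfl
  rw [LinearMap.coe_toContinuousLinearMap', hv,
    toEuclideanLin_equiv_symm_aux, euclid_norm_eq, euclid_norm_eq]
  have h2 := Real.sqrt_le_sqrt (h x)
  rw [Real.sqrt_mul (sq_nonneg C), Real.sqrt_sq hC] at h2
  exact h2

lemma specNorm_mulVec_abs_le (A : Matrix m n ℝ) (x : n → ℝ) (i : m) :
    (A.mulVec x i) ^ 2 ≤ specNorm A ^ 2 * ∑ j, x j ^ 2 := by
  refine le_trans ?_ (mulVec_sqnorm_le A x)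
  exact Finset.single_le_sum (f := fun i => (A.mulVec x i) ^ 2) (fun i _ => sq_nonneg _) (Finset.mem_univ i)

end Spec

section SpecAlg
variable {m n : Type*} [Fintype m] [Fintype n] [DecidableEq n]

lemma specNorm_add_le (A B : Matrix m n ℝ) : specNorm (A + B) ≤ specNorm A + specNorm B := by
  unfold specNorm
  rw [map_add, map_add]
  exact norm_add_le _ _

lemma specNorm_neg (A : Matrix m n ℝ) : specNorm (-A) = specNorm A := by
  unfold specNorm
  rw [map_neg, map_neg, norm_neg]

lemma specNorm_sub_le (A B : Matrix m n ℝ) : specNorm (A - B) ≤ specNorm A + specNorm B := by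
  rw [sub_eq_add_neg]
  exact (specNorm_add_le A (-B)).trans (by rw [specNorm_neg])

lemma specNorm_zero : specNorm (0 : Matrix m n ℝ) = 0 := by
  unfold specNorm
  rw [map_zero, map_zero, norm_zero]

end SpecAlg

section Inf
variable {m n : Type*} [Fintype m] [Fintype n]

lemma infNorm_le (A : Matrix m n ℝ) (a : ℝ) (ha : 0 ≤ a) (h : ∀ i j, |A i j| ≤ a) :
    infNorm A ≤ a := by
  unfold infNorm
  rcases isEmpty_or_nonempty m with hm | hm
  · simpa [Real.iSup_of_isEmpty] using ha
  rcases isEmpty_or_nonempty n with hn | hn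
  · refine ciSup_le fun i => ?_
    simpa [Real.iSup_of_isEmpty] using ha
  exact ciSup_le fun i => ciSup_le fun j => h i j

lemma le_infNorm (A : Matrix m n ℝ) (i : m) (j : n) : |A i j| ≤ infNorm A := by
  unfold infNorm
  have h1 : |A i j| ≤ ⨆ j', |A i j'| := le_ciSup (f := fun j' => |A i j'|) (Finite.bddAbove_range _) j
  exact h1.trans (le_ciSup (f := fun i' => ⨆ j', |A i' j'|) (Finite.bddAbove_range _) i)

end Inf

section Entry
variable {dm dn : Type*} [Fintype dm] [Fintype dn] [DecidableEq dn]

lemma entry_bound (B : Matrix dm dn ℝ) (u : dm → ℝ) (v : dn → ℝ) :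
    |∑ k, u k * B.mulVec v k| ≤
      specNorm B * (Real.sqrt (∑ k, u k ^ 2) * Real.sqrt (∑ l, v l ^ 2)) := by
  have hu : (0:ℝ) ≤ ∑ k, u k ^ 2 := Finset.sum_nonneg fun _ _ => sq_nonneg _
  have hv : (0:ℝ) ≤ ∑ l, v l ^ 2 := Finset.sum_nonneg fun _ _ => sq_nonneg _
  have cs := Finset.sum_mul_sq_le_sq_mul_sq Finset.univ u (fun k => B.mulVec v k)
  have h2 : (∑ k, u k * B.mulVec v k) ^ 2
      ≤ (∑ k, u k ^ 2) * (specNorm B ^ 2 * ∑ l, v l ^ 2) :=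
    cs.trans (mul_le_mul_of_nonneg_left (mulVec_sqnorm_le B v) hu)
  have h3 : |∑ k, u k * B.mulVec v k|
      = Real.sqrt ((∑ k, u k * B.mulVec v k) ^ 2) := (Real.sqrt_sq_eq_abs _).symm
  rw [h3]
  have h4 := Real.sqrt_le_sqrt h2
  rw [Real.sqrt_mul hu, Real.sqrt_mul (sq_nonneg _), Real.sqrt_sq (specNorm_nonneg B)] at h4
  calc Real.sqrt ((∑ k, u k * B.mulVec v k) ^ 2)
      ≤ Real.sqrt (∑ k, u k ^ 2) * (specNorm B * Real.sqrt (∑ l, v l ^ 2)) := h4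
    _ = specNorm B * (Real.sqrt (∑ k, u k ^ 2) * Real.sqrt (∑ l, v l ^ 2)) := by ring

end Entry

section Schur
variable {ni : Type*} [Fintype ni] [DecidableEq ni]

lemma specNorm_le_of_sparse (E : Matrix ni ni ℝ) (a : ℝ) (ha : 0 ≤ a)
    (hr : ∀ i, ∑ j, |E i j| ≤ a) (hc : ∀ j, ∑ i, |E i j| ≤ a) :
    specNorm E ≤ a := by
  refine specNorm_le_bound E a ha fun x => ?_
  have key : ∀ i, (E.mulVec x i) ^ 2 ≤ a * ∑ j, |E i j| * x j ^ 2 := by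
    intro i
    have h1 : |E.mulVec x i| ≤ ∑ j, |E i j * x j| := by
      simpa [mulVec, dotProduct] using Finset.abs_sum_le_sum_abs (fun j => E i j * x j) Finset.univ
    have h2 : (E.mulVec x i) ^ 2 ≤ (∑ j, |E i j * x j|) ^ 2 := by
      rw [← sq_abs]
      exact pow_le_pow_left₀ (abs_nonneg _) h1 2
    have h3 : (∑ j, |E i j * x j|) ^ 2 ≤ (∑ j, |E i j|) * ∑ j, |E i j| * x j ^ 2 := by
      have cs := Finset.sum_mul_sq_le_sq_mul_sq Finset.univ
        (fun j => Real.sqrt |E i j|) (fun j => Real.sqrt |E i j| * |x j|)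
      have e1 : ∀ j, Real.sqrt |E i j| * (Real.sqrt |E i j| * |x j|) = |E i j * x j| := by
        intro j
        rw [← mul_assoc, Real.mul_self_sqrt (abs_nonneg _), abs_mul]
      have e2 : ∀ j, (Real.sqrt |E i j|) ^ 2 = |E i j| := fun j => Real.sq_sqrt (abs_nonneg _)
      have e3 : ∀ j, (Real.sqrt |E i j| * |x j|) ^ 2 = |E i j| * x j ^ 2 := by
        intro j
        rw [mul_pow, Real.sq_sqrt (abs_nonneg _), sq_abs]
      simp_rw [e1, e2, e3] at cs
      exact cs
    have h4 : (∑ j, |E i j|) * (∑ j, |E i j| * x j ^ 2) ≤ a * ∑ j, |E i j| * x j ^ 2 :=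
      mul_le_mul_of_nonneg_right (hr i)
        (Finset.sum_nonneg fun j _ => mul_nonneg (abs_nonneg _) (sq_nonneg _))
    exact h2.trans (h3.trans h4)
  calc ∑ i, (E.mulVec x i) ^ 2
      ≤ ∑ i, a * ∑ j, |E i j| * x j ^ 2 := Finset.sum_le_sum fun i _ => key i
    _ = a * ∑ j, (∑ i, |E i j|) * x j ^ 2 := by
        rw [← Finset.mul_sum]
        congr 1
        rw [Finset.sum_comm]
        exact Finset.sum_congr rfl fun j _ => by rw [Finset.sum_mul]
    _ ≤ a * ∑ j, a * x j ^ 2 := by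
        refine mul_le_mul_of_nonneg_left (Finset.sum_le_sum fun j _ => ?_) ha
        exact mul_le_mul_of_nonneg_right (hc j) (sq_nonneg _)
    _ = a ^ 2 * ∑ j, x j ^ 2 := by rw [← Finset.mul_sum]; ring

end Schur

section Trunc

lemma truncation_bound {d r : ℕ} (A B Wm Δ : Matrix (Fin d) (Fin d) ℝ)
    (hA : A = Wm + Δ) (hrank : Wm.rank ≤ r)
    (h : IsTruncatedEigen r A B) :
    specNorm (B - A) ≤ specNorm Δ := by
  obtain ⟨Q, Λ, Qp, Λp, hQ, hQp, hQQp, hAeq, hBeq, hΛ⟩ := h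
  have hBA : B - A = -(Qp * Matrix.diagonal Λp * Qpᵀ) := by
    rw [hAeq, hBeq]; abel
  rcases isEmpty_or_nonempty (Fin (d - r)) with hemp | hne
  · have hz : Qp * Matrix.diagonal Λp * Qpᵀ = 0 := by
      ext i j
      simp [Matrix.mul_apply]
    rw [hBA, hz, neg_zero, specNorm_zero]
    exact specNorm_nonneg Δ
  · obtain ⟨j0, -, hj0⟩ := Finset.exists_max_image Finset.univ (fun j => |Λp j|)
      ⟨Classical.arbitrary _, Finset.mem_univ _⟩
    have hj0' : ∀ b, |Λp b| ≤ |Λp j0| := fun b => hj0 b (Finset.mem_univ b)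
    -- Step A : specNorm (Qp * diagonal Λp * Qpᵀ) ≤ |Λp j0|
    have stepA : specNorm (Qp * Matrix.diagonal Λp * Qpᵀ) ≤ |Λp j0| := by
      refine specNorm_le_bound _ _ (abs_nonneg _) fun x => ?_
      set y := Qpᵀ.mulVec x with hy
      have e1 : (Qp * Matrix.diagonal Λp * Qpᵀ).mulVec x
          = Qp.mulVec (fun b => Λp b * y b) := by
        rw [← Matrix.mulVec_mulVec, ← Matrix.mulVec_mulVec]
        have : Matrix.diagonal Λp *ᵥ (Qpᵀ *ᵥ x) = fun b => Λp b * y b := by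
          ext b
          rw [Matrix.mulVec_diagonal, hy]
        rw [this]
      rw [e1, sqnorm_mulVec_orth Qp hQp]
      have e2 : ∑ b, (Λp b * y b) ^ 2 ≤ |Λp j0| ^ 2 * ∑ b, y b ^ 2 := by
        rw [Finset.mul_sum]
        refine Finset.sum_le_sum fun b _ => ?_
        have : (Λp b) ^ 2 ≤ |Λp j0| ^ 2 := by
          rw [← sq_abs (Λp b)]
          exact pow_le_pow_left₀ (abs_nonneg _) (hj0' b) 2
        calc (Λp b * y b) ^ 2 = (Λp b) ^ 2 * y b ^ 2 := by ring
          _ ≤ |Λp j0| ^ 2 * y b ^ 2 := mul_le_mul_of_nonneg_right this (sq_nonneg _)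
      refine e2.trans ?_
      exact mul_le_mul_of_nonneg_left (sqnorm_transpose_mulVec_le Qp hQp x) (sq_nonneg _)
    -- Step B : |Λp j0| ≤ specNorm Δ
    have stepB : |Λp j0| ≤ specNorm Δ := by
      set Q' : Matrix (Fin d) (Fin (r + 1)) ℝ :=
        Matrix.of (fun i k => if h : (k : ℕ) < r then Q i ⟨k, h⟩ else Qp i j0) with hQ'
      have hQ'app : ∀ i k, Q' i k = if h : (k : ℕ) < r then Q i ⟨k, h⟩ else Qp i j0 :=
        fun i k => rfl
      have horth : Q'ᵀ * Q' = 1 := by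
        ext a b
        rw [Matrix.mul_apply]
        simp only [Matrix.transpose_apply, hQ'app]
        by_cases ha : (a : ℕ) < r <;> by_cases hb : (b : ℕ) < r
        · simp only [ha, hb, dif_pos]
          have := congrFun (congrFun hQ ⟨a, ha⟩) ⟨b, hb⟩
          rw [Matrix.mul_apply] at this
          simp only [Matrix.transpose_apply] at this
          rw [this]
          by_cases hab : a = b
          · subst hab; simp [Matrix.one_apply]
          · have : (⟨(a:ℕ), ha⟩ : Fin r) ≠ ⟨b, hb⟩ := by
              simp [Fin.ext_iff]; exact fun hh => hab (Fin.ext hh)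
            simp [Matrix.one_apply, this, Ne.symm, hab]
        · simp only [ha, hb, dif_pos, dif_neg, not_false_iff]
          have := congrFun (congrFun hQQp ⟨a, ha⟩) j0
          rw [Matrix.mul_apply] at this
          simp only [Matrix.transpose_apply, Matrix.zero_apply] at this
          rw [this]
          have hab : a ≠ b := by
            intro hh; rw [hh] at ha; exact hb ha
          simp [Matrix.one_apply, hab]
        · simp only [ha, hb, dif_pos, dif_neg, not_false_iff]
          have : ∑ i, Qp i j0 * Q i ⟨b, hb⟩ = 0 := by
            have h2 := congrFun (congrFun hQQp ⟨b, hb⟩) j0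
            rw [Matrix.mul_apply] at h2
            simp only [Matrix.transpose_apply, Matrix.zero_apply] at h2
            rw [← h2]
            exact Finset.sum_congr rfl fun i _ => mul_comm _ _
          rw [this]
          have hab : a ≠ b := by
            intro hh; rw [hh] at ha; exact ha hb
          simp [Matrix.one_apply, hab]
        · have hab : a = b := by
            have ha' : (a : ℕ) = r := Nat.le_antisymm (Nat.lt_succ_iff.mp a.isLt)
              (Nat.le_of_not_lt ha)
            have hb' : (b : ℕ) = r := Nat.le_antisymm (Nat.lt_succ_iff.mp b.isLt)
              (Nat.le_of_not_lt hb)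
            exact Fin.ext (ha'.trans hb'.symm)
          subst hab
          simp only [ha, dif_neg, not_false_iff]
          have := congrFun (congrFun hQp j0) j0
          rw [Matrix.mul_apply] at this
          simp only [Matrix.transpose_apply] at this
          rw [this]
          simp [Matrix.one_apply]
      -- kernel element
      have hrk2 : (Wm * Q').rank ≤ r := (Matrix.rank_mul_le_left Wm Q').trans hrank
      have hker : ∃ c : Fin (r + 1) → ℝ, c ≠ 0 ∧ (Wm * Q').mulVec c = 0 := by
        by_contra hcon
        push_neg at hcon
        have hinj : LinearMap.ker (Wm * Q').mulVecLin = ⊥ := by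
          rw [LinearMap.ker_eq_bot']
          intro c hc
          by_contra hc0
          exact absurd hc (by
            have := hcon c hc0
            simpa [Matrix.mulVecLin_apply] using this)
        have hrn := LinearMap.finrank_range_add_finrank_ker (Wm * Q').mulVecLin
        rw [hinj, finrank_bot, add_zero] at hrn
        have : (Wm * Q').rank = r + 1 := by
          rw [Matrix.rank]
          rw [hrn]
          simp [Module.finrank_pi]
        omega
      obtain ⟨c, hc0, hc⟩ := hker
      set x := Q'.mulVec c with hx
      have hWx : Wm.mulVec x = 0 := by
        rw [hx, Matrix.mulVec_mulVec, hc]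
      have hAx : A.mulVec x = Δ.mulVec x := by
        rw [hA, Matrix.add_mulVec, hWx, zero_add]
      have hxc : ∑ i, x i ^ 2 = ∑ k, c k ^ 2 := sqnorm_mulVec_orth Q' horth c
      -- coordinates
      have hu : Qᵀ.mulVec x = fun a => c (Fin.castSucc a) := by
        ext a
        rw [hx, Matrix.mulVec_mulVec]
        rw [Matrix.mulVec]
        rw [show (Qᵀ * Q') a = fun k : Fin (r+1) => if h : (k:ℕ) < r then (1 : Matrix (Fin r) (Fin r) ℝ) a ⟨k, h⟩ else 0 from ?_]
        · rw [dotProduct]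
          rw [Finset.sum_eq_single (Fin.castSucc a)]
          · simp [Matrix.one_apply, Fin.castSucc]
          · intro k _ hk
            by_cases hkr : (k : ℕ) < r
            · have : (⟨(k:ℕ), hkr⟩ : Fin r) ≠ a := by
                intro hh
                apply hk
                apply Fin.ext
                simpa [Fin.castSucc] using congrArg Fin.val hh
              simp [hkr, Matrix.one_apply, Ne.symm this]
            · simp [hkr]
          · intro hne
            exact absurd (Finset.mem_univ _) hne
        · ext k
          rw [Matrix.mul_apply]
          by_cases hkr : (k : ℕ) < r
          · simp only [hkr, dif_pos]
            have := congrFun (congrFun hQ a) ⟨k, hkr⟩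
            rw [Matrix.mul_apply] at this
            simp only [Matrix.transpose_apply] at this
            rw [← this]
            exact Finset.sum_congr rfl fun i _ => by simp [hQ'app, hkr]
          · simp only [hkr, dif_neg, not_false_iff]
            have := congrFun (congrFun hQQp a) j0
            rw [Matrix.mul_apply] at this
            simp only [Matrix.transpose_apply, Matrix.zero_apply] at this
            rw [← this]
            exact Finset.sum_congr rfl fun i _ => by simp [hQ'app, hkr]
      have hv : Qpᵀ.mulVec x = fun b => if b = j0 then c (Fin.last r) else 0 := by
        ext b
        rw [hx, Matrix.mulVec_mulVec]
        rw [Matrix.mulVec]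
        rw [show (Qpᵀ * Q') b = fun k : Fin (r+1) => if (k : ℕ) < r then 0 else (1 : Matrix (Fin (d-r)) (Fin (d-r)) ℝ) b j0 from ?_]
        · rw [dotProduct]
          rw [Finset.sum_eq_single (Fin.last r)]
          · simp [Matrix.one_apply, Fin.last, eq_comm]
          · intro k _ hk
            have hkr : (k : ℕ) < r := by
              rcases Nat.lt_succ_iff_lt_or_eq.mp k.isLt with h | h
              · exact h
              · exact absurd (Fin.ext h : k = Fin.last r) hk
            simp [hkr]
          · intro hne
            exact absurd (Finset.mem_univ _) hne
        · ext k
          rw [Matrix.mul_apply]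
          by_cases hkr : (k : ℕ) < r
          · simp only [hkr, if_pos]
            have h2 := congrFun (congrFun hQQp ⟨k, hkr⟩) b
            rw [Matrix.mul_apply] at h2
            simp only [Matrix.transpose_apply, Matrix.zero_apply] at h2
            rw [show (0:ℝ) = ∑ i, Q i ⟨k, hkr⟩ * Qp i b from h2.symm]
            exact Finset.sum_congr rfl fun i _ => by
              simp [hQ'app, hkr, mul_comm]
          · simp only [hkr, if_neg, not_false_iff]
            have h2 := congrFun (congrFun hQp b) j0
            rw [Matrix.mul_apply] at h2
            simp only [Matrix.transpose_apply] at h2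
            rw [← h2]
            exact Finset.sum_congr rfl fun i _ => by simp [hQ'app, hkr]
      -- decompose A.mulVec x
      have hAx2 : A.mulVec x = Q.mulVec (fun a => Λ a * c (Fin.castSucc a))
          + Qp.mulVec (fun b => Λp b * (if b = j0 then c (Fin.last r) else 0)) := by
        rw [hAeq, Matrix.add_mulVec]
        congr 1
        · rw [← Matrix.mulVec_mulVec, ← Matrix.mulVec_mulVec, hu]
          have : Matrix.diagonal Λ *ᵥ (fun a => c (Fin.castSucc a))
              = fun a => Λ a * c (Fin.castSucc a) := by
            ext a
            rw [Matrix.mulVec_diagonal]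
          rw [this]
        · rw [← Matrix.mulVec_mulVec, ← Matrix.mulVec_mulVec, hv]
          have : Matrix.diagonal Λp *ᵥ (fun b => if b = j0 then c (Fin.last r) else 0)
              = fun b => Λp b * (if b = j0 then c (Fin.last r) else 0) := by
            ext b
            rw [Matrix.mulVec_diagonal]
          rw [this]
      have hcross := sum_mulVec_orthzero Q Qp hQQp
        (fun a => Λ a * c (Fin.castSucc a))
        (fun b => Λp b * (if b = j0 then c (Fin.last r) else 0))
      have hsum : ∑ i, (A.mulVec x i) ^ 2
          = (∑ a, (Λ a * c (Fin.castSucc a)) ^ 2) + (Λp j0 * c (Fin.last r)) ^ 2 := by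
        rw [hAx2]
        have expand : ∀ i, (Q.mulVec (fun a => Λ a * c (Fin.castSucc a)) i
            + Qp.mulVec (fun b => Λp b * (if b = j0 then c (Fin.last r) else 0)) i) ^ 2
            = (Q.mulVec (fun a => Λ a * c (Fin.castSucc a)) i) ^ 2
            + 2 * (Q.mulVec (fun a => Λ a * c (Fin.castSucc a)) i
                * Qp.mulVec (fun b => Λp b * (if b = j0 then c (Fin.last r) else 0)) i)
            + (Qp.mulVec (fun b => Λp b * (if b = j0 then c (Fin.last r) else 0)) i) ^ 2 :=
          fun i => by simp [Matrix.add_mulVec]; ring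
        simp_rw [Pi.add_apply, expand]
        rw [Finset.sum_add_distrib, Finset.sum_add_distrib, ← Finset.mul_sum, hcross,
          mul_zero, add_zero]
        rw [sqnorm_mulVec_orth Q hQ, sqnorm_mulVec_orth Qp hQp]
        congr 1
        rw [Finset.sum_eq_single j0]
        · simp
        · intro b _ hb
          simp [hb]
        · intro hne
          exact absurd (Finset.mem_univ _) hne
      have hlow : |Λp j0| ^ 2 * ∑ k, c k ^ 2 ≤ ∑ i, (A.mulVec x i) ^ 2 := by
        rw [hsum]
        rw [Fin.sum_univ_castSucc (f := fun k => c k ^ 2)]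
        rw [mul_add, Finset.mul_sum]
        have t1 : ∀ a : Fin r, |Λp j0| ^ 2 * c (Fin.castSucc a) ^ 2
            ≤ (Λ a * c (Fin.castSucc a)) ^ 2 := by
          intro a
          have : |Λp j0| ^ 2 ≤ (Λ a) ^ 2 := by
            rw [← sq_abs (Λ a)]
            exact pow_le_pow_left₀ (abs_nonneg _) (hΛ a j0) 2
          calc |Λp j0| ^ 2 * c (Fin.castSucc a) ^ 2
              ≤ (Λ a) ^ 2 * c (Fin.castSucc a) ^ 2 :=
                mul_le_mul_of_nonneg_right this (sq_nonneg _)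
            _ = (Λ a * c (Fin.castSucc a)) ^ 2 := by ring
        have t2 : |Λp j0| ^ 2 * c (Fin.last r) ^ 2 ≤ (Λp j0 * c (Fin.last r)) ^ 2 := by
          have e : (Λp j0 * c (Fin.last r)) ^ 2 = |Λp j0| ^ 2 * c (Fin.last r) ^ 2 := by
            rw [sq_abs]; ring
          exact le_of_eq e.symm
        exact add_le_add (Finset.sum_le_sum fun a _ => t1 a) t2
      have hup : ∑ i, (A.mulVec x i) ^ 2 ≤ specNorm Δ ^ 2 * ∑ k, c k ^ 2 := by
        rw [hAx]
        calc ∑ i, (Δ.mulVec x i) ^ 2 ≤ specNorm Δ ^ 2 * ∑ i, x i ^ 2 :=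
              mulVec_sqnorm_le Δ x
          _ = specNorm Δ ^ 2 * ∑ k, c k ^ 2 := by rw [hxc]
      have hcpos : 0 < ∑ k, c k ^ 2 := by
        have : ∃ k, c k ≠ 0 := Function.ne_iff.mp hc0
        obtain ⟨k, hk⟩ := this
        refine Finset.sum_pos' (fun k _ => sq_nonneg _) ⟨k, Finset.mem_univ k, ?_⟩
        positivity
      have hsq : |Λp j0| ^ 2 ≤ specNorm Δ ^ 2 :=
        le_of_mul_le_mul_right (by linarith) hcpos
      calc |Λp j0| = Real.sqrt (|Λp j0| ^ 2) := (Real.sqrt_sq (abs_nonneg _)).symm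
        _ ≤ Real.sqrt (specNorm Δ ^ 2) := Real.sqrt_le_sqrt hsq
        _ = specNorm Δ := Real.sqrt_sq (specNorm_nonneg Δ)
    rw [hBA, specNorm_neg]
    exact stepA.trans stepB

end Trunc

section Helpers
variable {m k l : Type*} [Fintype m] [Fintype k] [Fintype l]

lemma orth_col_sq [DecidableEq k] (M : Matrix m k ℝ) (h : Mᵀ * M = 1) (p : k) :
    ∑ i, M i p ^ 2 = 1 := by
  have h2 := congrFun (congrFun h p) p
  rw [Matrix.mul_apply] at h2
  simp only [Matrix.transpose_apply, Matrix.one_apply_eq] at h2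
  rw [← h2]
  exact Finset.sum_congr rfl fun i _ => (pow_two _)

lemma mulVec_col (M : Matrix m k ℝ) (N : Matrix k l ℝ) (a : l) :
    M.mulVec (fun i => N i a) = fun p => (M * N) p a := by
  ext p
  rw [Matrix.mul_apply]
  rfl

lemma svd_col {m1 m2 dT : Type*} [Fintype m1] [Fintype m2] [Fintype dT] [DecidableEq dT]
    (M1 : Matrix m1 dT ℝ) (M2 : Matrix m2 dT ℝ) (h2 : M2ᵀ * M2 = 1) (w : dT → ℝ) (a : dT) :
    (M1 * Matrix.diagonal w * M2ᵀ).mulVec (fun i => M2 i a) = fun p => M1 p a * w a := by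
  rw [mulVec_col]
  have h3 : M1 * Matrix.diagonal w * M2ᵀ * M2 = M1 * Matrix.diagonal w := by
    rw [Matrix.mul_assoc, h2, Matrix.mul_one]
  rw [h3]
  ext p
  rw [Matrix.mul_diagonal]

end Helpers

section SVD
variable {dd nn : ℕ} (F : Matrix (Fin dd) (Fin nn) ℝ) (U : Matrix (Fin dd) (Fin dd) ℝ)
  (σ : Fin dd → ℝ) (V : Matrix (Fin nn) (Fin dd) ℝ)

lemma svd_transpose (hFsvd : F = U * Matrix.diagonal σ * Vᵀ) :
    Fᵀ = V * Matrix.diagonal σ * Uᵀ := by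
  rw [hFsvd]
  rw [Matrix.transpose_mul, Matrix.transpose_mul, Matrix.transpose_transpose,
    Matrix.diagonal_transpose, Matrix.mul_assoc]

lemma sigma_ne_zero (hrk : F.rank = dd) (hFsvd : F = U * Matrix.diagonal σ * Vᵀ)
    (a : Fin dd) : σ a ≠ 0 := by
  intro ha
  have h1 : F.rank ≤ (Matrix.diagonal σ).rank := by
    rw [hFsvd]
    exact (Matrix.rank_mul_le_left _ _).trans (Matrix.rank_mul_le_right _ _)
  rw [Matrix.rank_diagonal] at h1
  have h2 : Fintype.card {i // σ i ≠ 0} < Fintype.card (Fin dd) :=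
    Fintype.card_subtype_lt (x := a) (by simp [ha])
  rw [Fintype.card_fin] at h2
  omega

lemma F_mulVec_Vcol (hU : Uᵀ * U = 1) (hVo : Vᵀ * V = 1)
    (hFsvd : F = U * Matrix.diagonal σ * Vᵀ) (a : Fin dd) :
    F.mulVec (fun j => V j a) = fun p => U p a * σ a := by
  rw [hFsvd]
  exact svd_col U V hVo σ a

lemma Ft_mulVec_Ucol (hU : Uᵀ * U = 1) (hFsvd : F = U * Matrix.diagonal σ * Vᵀ)
    (a : Fin dd) : Fᵀ.mulVec (fun k => U k a) = fun j => V j a * σ a := by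
  rw [svd_transpose F U σ V hFsvd]
  exact svd_col V U hU σ a

lemma sigma_sq_le_spec (hU : Uᵀ * U = 1) (hVo : Vᵀ * V = 1)
    (hFsvd : F = U * Matrix.diagonal σ * Vᵀ) (a : Fin dd) :
    σ a ^ 2 ≤ specNorm F ^ 2 := by
  have h1 := mulVec_sqnorm_le F (fun j => V j a)
  rw [F_mulVec_Vcol F U σ V hU hVo hFsvd a] at h1
  have h2 : ∑ p, (U p a * σ a) ^ 2 = σ a ^ 2 := by
    have : ∀ p, (U p a * σ a) ^ 2 = σ a ^ 2 * U p a ^ 2 := fun p => by ring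
    simp_rw [this]
    rw [← Finset.mul_sum, orth_col_sq U hU a, mul_one]
  have h3 : ∑ j, V j a ^ 2 = 1 := orth_col_sq V hVo a
  rw [h2, h3, mul_one] at h1
  exact h1

lemma colF_sq_bound {μ : ℝ} (hU : Uᵀ * U = 1) (hVo : Vᵀ * V = 1)
    (hFsvd : F = U * Matrix.diagonal σ * Vᵀ)
    (hinc : ∀ i, Real.sqrt (∑ j, V i j ^ 2) ≤ μ * Real.sqrt ((dd : ℝ) / nn))
    (i : Fin nn) :
    ∑ k, F k i ^ 2 ≤ specNorm F ^ 2 * (μ ^ 2 * ((dd : ℝ) / nn)) := by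
  have hcol : (fun k => F k i) = U.mulVec (fun a => σ a * V i a) := by
    ext k
    rw [hFsvd]
    rw [Matrix.mul_apply]
    unfold Matrix.mulVec dotProduct
    refine Finset.sum_congr rfl fun a _ => ?_
    rw [Matrix.mul_diagonal]
    simp [mul_assoc]
  have h1 : ∑ k, F k i ^ 2 = ∑ a, (σ a * V i a) ^ 2 := by
    have := sqnorm_mulVec_orth U hU (fun a => σ a * V i a)
    rw [← this]
    exact Finset.sum_congr rfl fun k _ => by rw [congrFun hcol k]
  rw [h1]
  have h2 : ∑ a, (σ a * V i a) ^ 2 ≤ specNorm F ^ 2 * ∑ a, V i a ^ 2 := by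
    rw [Finset.mul_sum]
    refine Finset.sum_le_sum fun a _ => ?_
    calc (σ a * V i a) ^ 2 = σ a ^ 2 * V i a ^ 2 := by ring
      _ ≤ specNorm F ^ 2 * V i a ^ 2 :=
        mul_le_mul_of_nonneg_right (sigma_sq_le_spec F U σ V hU hVo hFsvd a) (sq_nonneg _)
  refine h2.trans ?_
  refine mul_le_mul_of_nonneg_left ?_ (sq_nonneg _)
  have h3 := hinc i
  have h4 : ∑ a, V i a ^ 2 = Real.sqrt (∑ a, V i a ^ 2) ^ 2 :=
    (Real.sq_sqrt (Finset.sum_nonneg fun _ _ => sq_nonneg _)).symm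
  rw [h4]
  calc Real.sqrt (∑ a, V i a ^ 2) ^ 2 ≤ (μ * Real.sqrt ((dd:ℝ)/nn)) ^ 2 :=
        pow_le_pow_left₀ (Real.sqrt_nonneg _) h3 2
    _ = μ ^ 2 * Real.sqrt ((dd:ℝ)/nn) ^ 2 := by ring
    _ = μ ^ 2 * ((dd:ℝ)/nn) := by rw [Real.sq_sqrt (by positivity)]

end SVD

section SMin
variable {dd nn : ℕ} (F : Matrix (Fin dd) (Fin nn) ℝ) (U : Matrix (Fin dd) (Fin dd) ℝ)
  (σ : Fin dd → ℝ) (V : Matrix (Fin nn) (Fin dd) ℝ)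

lemma sigmaMin_le_abs (hU : Uᵀ * U = 1) (hVo : Vᵀ * V = 1)
    (hFsvd : F = U * Matrix.diagonal σ * Vᵀ) (a : Fin dd) : sigmaMin F ≤ |σ a| := by
  unfold sigmaMin
  have hbdd : BddBelow ((fun y : EuclideanSpace ℝ (Fin dd) =>
      ‖Matrix.toEuclideanLin Fᵀ y‖) '' {y | ‖y‖ = 1}) :=
    ⟨0, fun v hv => by
      obtain ⟨y, -, rfl⟩ := hv
      exact norm_nonneg _⟩
  refine csInf_le hbdd ⟨(WithLp.equiv 2 (Fin dd → ℝ)).symm (fun k => U k a), ?_, ?_⟩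
  · show ‖(WithLp.equiv 2 (Fin dd → ℝ)).symm (fun k => U k a)‖ = 1
    rw [euclid_norm_eq, orth_col_sq U hU a, Real.sqrt_one]
  · show ‖Matrix.toEuclideanLin Fᵀ _‖ = |σ a|
    rw [toEuclideanLin_equiv_symm_aux, euclid_norm_eq,
      Ft_mulVec_Ucol F U σ V hU hFsvd a]
    have h2 : ∑ j, (V j a * σ a) ^ 2 = σ a ^ 2 := by
      have e : ∀ j, (V j a * σ a) ^ 2 = σ a ^ 2 * V j a ^ 2 := fun j => by ring
      simp_rw [e]
      rw [← Finset.mul_sum, orth_col_sq V hVo a, mul_one]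
    rw [h2, Real.sqrt_sq_eq_abs]

lemma sigmaMin_pos (hd : 0 < dd) (hU : Uᵀ * U = 1) (hVo : Vᵀ * V = 1)
    (hFsvd : F = U * Matrix.diagonal σ * Vᵀ) (hσ : ∀ a, σ a ≠ 0) : 0 < sigmaMin F := by
  haveI : Nonempty (Fin dd) := Fin.pos_iff_nonempty.mp hd
  obtain ⟨a0, -, ha0⟩ := Finset.exists_min_image Finset.univ (fun a => |σ a|)
    ⟨Classical.arbitrary _, Finset.mem_univ _⟩
  have ha0' : ∀ b, |σ a0| ≤ |σ b| := fun b => ha0 b (Finset.mem_univ b)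
  have hm0 : 0 < |σ a0| := abs_pos.mpr (hσ a0)
  have hUU : U * Uᵀ = 1 := mul_eq_one_comm.mp hU
  have hUt : Uᵀᵀ * Uᵀ = 1 := by rw [Matrix.transpose_transpose]; exact hUU
  have key : ∀ y : EuclideanSpace ℝ (Fin dd), ‖y‖ = 1 →
      |σ a0| ≤ ‖Matrix.toEuclideanLin Fᵀ y‖ := by
    intro y hy
    set x : Fin dd → ℝ := WithLp.equiv 2 (Fin dd → ℝ) y with hxdef
    have hyx : y = (WithLp.equiv 2 (Fin dd → ℝ)).symm x := rfl
    have hnn : (0:ℝ) ≤ ∑ k, x k ^ 2 := Finset.sum_nonneg fun _ _ => sq_nonneg _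
    have hx1 : ∑ k, x k ^ 2 = 1 := by
      have h2 : Real.sqrt (∑ k, x k ^ 2) = 1 := by
        rw [hyx, euclid_norm_eq] at hy
        exact hy
      calc ∑ k, x k ^ 2 = Real.sqrt (∑ k, x k ^ 2) ^ 2 := (Real.sq_sqrt hnn).symm
        _ = 1 := by rw [h2]; norm_num
    rw [hyx, toEuclideanLin_equiv_symm_aux, euclid_norm_eq]
    have e1 : V *ᵥ (Matrix.diagonal σ *ᵥ (Uᵀ *ᵥ x)) = Fᵀ *ᵥ x := by
      rw [Matrix.mulVec_mulVec, Matrix.mulVec_mulVec, svd_transpose F U σ V hFsvd]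
    have e2 : ∑ j, (Fᵀ *ᵥ x) j ^ 2 = ∑ b, (σ b * (Uᵀ *ᵥ x) b) ^ 2 := by
      rw [← e1, sqnorm_mulVec_orth V hVo]
      exact Finset.sum_congr rfl fun b _ => by rw [Matrix.mulVec_diagonal]
    have e3 : ∑ b, (σ b * (Uᵀ *ᵥ x) b) ^ 2 ≥ |σ a0| ^ 2 * ∑ b, (Uᵀ *ᵥ x) b ^ 2 := by
      rw [Finset.mul_sum]
      refine Finset.sum_le_sum fun b _ => ?_
      have hb : |σ a0| ^ 2 ≤ σ b ^ 2 := by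
        rw [← sq_abs (σ b)]
        exact pow_le_pow_left₀ (abs_nonneg _) (ha0' b) 2
      calc |σ a0| ^ 2 * (Uᵀ *ᵥ x) b ^ 2 ≤ σ b ^ 2 * (Uᵀ *ᵥ x) b ^ 2 :=
            mul_le_mul_of_nonneg_right hb (sq_nonneg _)
        _ = (σ b * (Uᵀ *ᵥ x) b) ^ 2 := by ring
    have e4 : ∑ b, (Uᵀ *ᵥ x) b ^ 2 = 1 := by
      rw [sqnorm_mulVec_orth Uᵀ hUt x, hx1]
    calc |σ a0| = Real.sqrt (|σ a0| ^ 2) := (Real.sqrt_sq (abs_nonneg _)).symm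
      _ ≤ Real.sqrt (∑ j, (Fᵀ *ᵥ x) j ^ 2) := by
          refine Real.sqrt_le_sqrt ?_
          rw [e2]
          calc |σ a0| ^ 2 = |σ a0| ^ 2 * ∑ b, (Uᵀ *ᵥ x) b ^ 2 := by rw [e4, mul_one]
            _ ≤ ∑ b, (σ b * (Uᵀ *ᵥ x) b) ^ 2 := e3
  have hne : ((fun y : EuclideanSpace ℝ (Fin dd) =>
      ‖Matrix.toEuclideanLin Fᵀ y‖) '' {y | ‖y‖ = 1}).Nonempty := by
    refine ⟨_, ⟨(WithLp.equiv 2 (Fin dd → ℝ)).symm (fun k => U k a0), ?_, rfl⟩⟩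
    show ‖(WithLp.equiv 2 (Fin dd → ℝ)).symm (fun k => U k a0)‖ = 1
    rw [euclid_norm_eq, orth_col_sq U hU a0, Real.sqrt_one]
  have hge : |σ a0| ≤ sigmaMin F := by
    unfold sigmaMin
    refine le_csInf hne ?_
    rintro b ⟨y, hy, rfl⟩
    exact key y hy
  linarith

lemma FFt_eq (hVo : Vᵀ * V = 1) (hFsvd : F = U * Matrix.diagonal σ * Vᵀ) :
    F * Fᵀ = U * Matrix.diagonal (fun a => σ a * σ a) * Uᵀ := by
  rw [svd_transpose F U σ V hFsvd, hFsvd]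
  simp only [Matrix.mul_assoc]
  rw [← Matrix.mul_assoc Vᵀ V, hVo, Matrix.one_mul, ← Matrix.mul_assoc
    (Matrix.diagonal σ) (Matrix.diagonal σ), Matrix.diagonal_mul_diagonal]

lemma FFt_inv (hU : Uᵀ * U = 1) (hVo : Vᵀ * V = 1)
    (hFsvd : F = U * Matrix.diagonal σ * Vᵀ) (hσ : ∀ a, σ a ≠ 0) :
    (F * Fᵀ)⁻¹ = U * Matrix.diagonal (fun a => (σ a * σ a)⁻¹) * Uᵀ := by
  have hUU : U * Uᵀ = 1 := mul_eq_one_comm.mp hU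
  apply Matrix.inv_eq_right_inv
  rw [FFt_eq F U σ V hVo hFsvd]
  simp only [Matrix.mul_assoc]
  rw [← Matrix.mul_assoc Uᵀ U, hU, Matrix.one_mul, ← Matrix.mul_assoc
    (Matrix.diagonal fun a => σ a * σ a) (Matrix.diagonal fun a => (σ a * σ a)⁻¹),
    Matrix.diagonal_mul_diagonal]
  have e : (fun a => σ a * σ a * (σ a * σ a)⁻¹) = fun _ => (1:ℝ) :=
    funext fun a => mul_inv_cancel₀ (mul_ne_zero (hσ a) (hσ a))
  rw [e, Matrix.diagonal_one, Matrix.one_mul, hUU]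

lemma pinv_eq (hU : Uᵀ * U = 1) (hVo : Vᵀ * V = 1)
    (hFsvd : F = U * Matrix.diagonal σ * Vᵀ) (hσ : ∀ a, σ a ≠ 0) :
    pinv F = V * Matrix.diagonal (fun a => (σ a)⁻¹) * Uᵀ := by
  unfold pinv
  rw [FFt_inv F U σ V hU hVo hFsvd hσ, svd_transpose F U σ V hFsvd]
  simp only [Matrix.mul_assoc]
  rw [← Matrix.mul_assoc Uᵀ U, hU, Matrix.one_mul, ← Matrix.mul_assoc
    (Matrix.diagonal σ) (Matrix.diagonal fun a => (σ a * σ a)⁻¹),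
    Matrix.diagonal_mul_diagonal]
  have e : (fun a => σ a * (σ a * σ a)⁻¹) = fun a => (σ a)⁻¹ := funext fun a => by
    rw [mul_inv, ← mul_assoc, mul_inv_cancel₀ (hσ a), one_mul]
  rw [e]

lemma F_mul_pinv (hU : Uᵀ * U = 1) (hVo : Vᵀ * V = 1)
    (hFsvd : F = U * Matrix.diagonal σ * Vᵀ) (hσ : ∀ a, σ a ≠ 0) :
    F * pinv F = 1 := by
  have hUU : U * Uᵀ = 1 := mul_eq_one_comm.mp hU
  rw [pinv_eq F U σ V hU hVo hFsvd hσ, hFsvd]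
  simp only [Matrix.mul_assoc]
  rw [← Matrix.mul_assoc Vᵀ V, hVo, Matrix.one_mul, ← Matrix.mul_assoc
    (Matrix.diagonal σ) (Matrix.diagonal fun a => (σ a)⁻¹), Matrix.diagonal_mul_diagonal]
  have e : (fun a => σ a * (σ a)⁻¹) = fun _ => (1:ℝ) :=
    funext fun a => mul_inv_cancel₀ (hσ a)
  rw [e, Matrix.diagonal_one, Matrix.one_mul, hUU]

lemma pinvT_eq (hU : Uᵀ * U = 1) (hVo : Vᵀ * V = 1)
    (hFsvd : F = U * Matrix.diagonal σ * Vᵀ) (hσ : ∀ a, σ a ≠ 0) :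
    (pinv F)ᵀ = U * Matrix.diagonal (fun a => (σ a)⁻¹) * Vᵀ := by
  rw [pinv_eq F U σ V hU hVo hFsvd hσ, Matrix.transpose_mul, Matrix.transpose_mul,
    Matrix.transpose_transpose, Matrix.diagonal_transpose, Matrix.mul_assoc]

lemma diag_conj_sqnorm_le {mA mB : Type*} [Fintype mA] [Fintype mB] [DecidableEq (Fin dd)]
    (P : Matrix mA (Fin dd) ℝ) (Rt : Matrix (Fin dd) mB ℝ) (s : ℝ)
    (hP : Pᵀ * P = 1) (hs : 0 ≤ s)
    (hσs : ∀ a, (σ a)⁻¹ ^ 2 ≤ s ^ 2)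
    (hR : ∀ x : mB → ℝ, ∑ a, (Rt *ᵥ x) a ^ 2 ≤ ∑ k, x k ^ 2) (x : mB → ℝ) :
    ∑ j, ((P * Matrix.diagonal (fun a => (σ a)⁻¹) * Rt) *ᵥ x) j ^ 2
      ≤ s ^ 2 * ∑ k, x k ^ 2 := by
  have e1 : (P * Matrix.diagonal (fun a => (σ a)⁻¹) * Rt) *ᵥ x
      = P *ᵥ (Matrix.diagonal (fun a => (σ a)⁻¹) *ᵥ (Rt *ᵥ x)) := by
    rw [Matrix.mulVec_mulVec, Matrix.mulVec_mulVec]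
  rw [e1, sqnorm_mulVec_orth P hP]
  have e2 : ∑ a, (Matrix.diagonal (fun a => (σ a)⁻¹) *ᵥ (Rt *ᵥ x)) a ^ 2
      ≤ s ^ 2 * ∑ a, (Rt *ᵥ x) a ^ 2 := by
    rw [Finset.mul_sum]
    refine Finset.sum_le_sum fun a _ => ?_
    rw [Matrix.mulVec_diagonal]
    calc ((σ a)⁻¹ * (Rt *ᵥ x) a) ^ 2 = (σ a)⁻¹ ^ 2 * (Rt *ᵥ x) a ^ 2 := by ring
      _ ≤ s ^ 2 * (Rt *ᵥ x) a ^ 2 := mul_le_mul_of_nonneg_right (hσs a) (sq_nonneg _)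
  refine e2.trans ?_
  exact mul_le_mul_of_nonneg_left (hR x) (sq_nonneg _)

lemma specNorm_pinv_conj (hd : 0 < dd) (hU : Uᵀ * U = 1) (hVo : Vᵀ * V = 1)
    (hFsvd : F = U * Matrix.diagonal σ * Vᵀ) (hσ : ∀ a, σ a ≠ 0)
    (E : Matrix (Fin nn) (Fin nn) ℝ) :
    specNorm ((pinv F)ᵀ * E * pinv F) ≤ ((sigmaMin F)⁻¹) ^ 2 * specNorm E := by
  have hspos := sigmaMin_pos F U σ V hd hU hVo hFsvd hσ
  have hsle := fun a => sigmaMin_le_abs F U σ V hU hVo hFsvd a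
  set s := (sigmaMin F)⁻¹ with hs
  have hs0 : 0 ≤ s := inv_nonneg.mpr hspos.le
  have hσs : ∀ a, (σ a)⁻¹ ^ 2 ≤ s ^ 2 := by
    intro a
    have h1 : |(σ a)⁻¹| ≤ s := by
      rw [abs_inv]
      exact inv_anti₀ hspos (hsle a)
    calc (σ a)⁻¹ ^ 2 = |(σ a)⁻¹| ^ 2 := (sq_abs _).symm
      _ ≤ s ^ 2 := pow_le_pow_left₀ (abs_nonneg _) h1 2
  have hUU : U * Uᵀ = 1 := mul_eq_one_comm.mp hU
  have hUt : Uᵀᵀ * Uᵀ = 1 := by rw [Matrix.transpose_transpose]; exact hUU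
  -- bound for pinv F
  have hPinv : ∀ x : Fin dd → ℝ, ∑ j, ((pinv F) *ᵥ x) j ^ 2 ≤ s ^ 2 * ∑ k, x k ^ 2 := by
    intro x
    rw [pinv_eq F U σ V hU hVo hFsvd hσ]
    exact diag_conj_sqnorm_le σ V Uᵀ s hVo hs0 hσs
      (fun x => le_of_eq (sqnorm_mulVec_orth Uᵀ hUt x)) x
  have hPinvT : ∀ x : Fin nn → ℝ, ∑ j, ((pinv F)ᵀ *ᵥ x) j ^ 2 ≤ s ^ 2 * ∑ k, x k ^ 2 := by
    intro x
    rw [pinvT_eq F U σ V hU hVo hFsvd hσ]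
    exact diag_conj_sqnorm_le σ U Vᵀ s hU hs0 hσs
      (fun x => sqnorm_transpose_mulVec_le V hVo x) x
  refine specNorm_le_bound _ _ (mul_nonneg (sq_nonneg s) (specNorm_nonneg E)) fun x => ?_
  have e1 : ((pinv F)ᵀ * E * pinv F) *ᵥ x = (pinv F)ᵀ *ᵥ (E *ᵥ ((pinv F) *ᵥ x)) := by
    rw [Matrix.mulVec_mulVec, Matrix.mulVec_mulVec]
  rw [e1]
  have c1 := hPinvT (E *ᵥ ((pinv F) *ᵥ x))
  have c2 := mulVec_sqnorm_le E ((pinv F) *ᵥ x)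
  have c3 := hPinv x
  have hE0 : (0:ℝ) ≤ specNorm E ^ 2 := sq_nonneg _
  have hs2 : (0:ℝ) ≤ s ^ 2 := sq_nonneg _
  calc ∑ j, ((pinv F)ᵀ *ᵥ (E *ᵥ ((pinv F) *ᵥ x))) j ^ 2
      ≤ s ^ 2 * ∑ k, (E *ᵥ ((pinv F) *ᵥ x)) k ^ 2 := c1
    _ ≤ s ^ 2 * (specNorm E ^ 2 * ∑ k, ((pinv F) *ᵥ x) k ^ 2) :=
        mul_le_mul_of_nonneg_left c2 hs2
    _ ≤ s ^ 2 * (specNorm E ^ 2 * (s ^ 2 * ∑ k, x k ^ 2)) :=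
        mul_le_mul_of_nonneg_left (mul_le_mul_of_nonneg_left c3 hE0) hs2
    _ = (s ^ 2 * specNorm E) ^ 2 * ∑ k, x k ^ 2 := by ring
end SMin

section Final
variable {dd nn : ℕ} (F : Matrix (Fin dd) (Fin nn) ℝ)

lemma FtBF_entry (B : Matrix (Fin dd) (Fin dd) ℝ) (i j : Fin nn) :
    (Fᵀ * B * F) i j = ∑ k, F k i * B.mulVec (fun l => F l j) k := by
  rw [Matrix.mul_assoc, Matrix.mul_apply]
  refine Finset.sum_congr rfl fun k _ => ?_
  rw [congrFun (mulVec_col B F j) k]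
  rfl

lemma sqrt_col_le {μ : ℝ} (U : Matrix (Fin dd) (Fin dd) ℝ) (σ : Fin dd → ℝ)
    (V : Matrix (Fin nn) (Fin dd) ℝ)
    (hU : Uᵀ * U = 1) (hVo : Vᵀ * V = 1) (hFsvd : F = U * Matrix.diagonal σ * Vᵀ)
    (hinc : ∀ i, Real.sqrt (∑ j, V i j ^ 2) ≤ μ * Real.sqrt ((dd : ℝ) / nn))
    (hG0 : 0 ≤ μ * Real.sqrt ((dd : ℝ) / nn)) (i : Fin nn) :
    Real.sqrt (∑ k, F k i ^ 2) ≤ specNorm F * (μ * Real.sqrt ((dd : ℝ) / nn)) := by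
  have h1 := colF_sq_bound F U σ V hU hVo hFsvd hinc i
  have h2 : specNorm F ^ 2 * (μ ^ 2 * ((dd : ℝ) / nn))
      = (specNorm F * (μ * Real.sqrt ((dd : ℝ) / nn))) ^ 2 := by
    have e : Real.sqrt ((dd : ℝ) / nn) ^ 2 = (dd : ℝ) / nn := Real.sq_sqrt (by positivity)
    rw [mul_pow, mul_pow, e]
  calc Real.sqrt (∑ k, F k i ^ 2)
      ≤ Real.sqrt ((specNorm F * (μ * Real.sqrt ((dd : ℝ) / nn))) ^ 2) :=
        Real.sqrt_le_sqrt (by rw [← h2]; exact h1)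
    _ = specNorm F * (μ * Real.sqrt ((dd : ℝ) / nn)) :=
        Real.sqrt_sq (mul_nonneg (specNorm_nonneg F) hG0)

end Final

set_option maxHeartbeats 1600000 in
theorem stmt16 {d n r z : ℕ} (F : Matrix (Fin d) (Fin n) ℝ)
    (U : Matrix (Fin d) (Fin d) ℝ) (σ : Fin d → ℝ) (V : Matrix (Fin n) (Fin d) ℝ)
    (μ κ c_W : ℝ) (hrk : F.rank = d)
    (hU : Uᵀ * U = 1) (hVo : Vᵀ * V = 1) (hFsvd : F = U * Matrix.diagonal σ * Vᵀ)
    (hinc : ∀ i, Real.sqrt (∑ j, V i j ^ 2) ≤ μ * Real.sqrt ((d : ℝ) / n))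
    (hκ : κ = specNorm F / sigmaMin F)
    (Wstar : Matrix (Fin d) (Fin d) ℝ) (hWs : Wstar.IsSymm) (hWr : Wstar.rank = r)
    (hWb : specNorm Wstar ≤ c_W)
    (Sstar M : Matrix (Fin n) (Fin n) ℝ)
    (hrow : ∀ i, nnzRow Sstar i ≤ z) (hcol : ∀ j, nnzCol Sstar j ≤ z)
    (hz : (z : ℝ) ≤ (n : ℝ) / (20 * μ ^ 2 * d * κ ^ 2))
    (hM : M = Fᵀ * Wstar * F + Sstar)
    (L S : ℕ → Matrix (Fin n) (Fin n) ℝ) (W : ℕ → Matrix (Fin d) (Fin d) ℝ)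
    (ζ : ℕ → ℝ)
    (hζ : ∀ t : ℕ, ζ t = μ ^ 2 * specNorm F ^ 2 * ((d : ℝ) / n) * c_W / 5 ^ (t - 1))
    (hL0 : L 0 = 0)
    (hS : ∀ t : ℕ, 1 ≤ t → S t = hardThresh (ζ t) (M - L (t - 1)))
    (hWt : ∀ t : ℕ, 1 ≤ t →
      IsTruncatedEigen r ((pinv F)ᵀ * (M - S t) * pinv F) (W t))
    (hL : ∀ t : ℕ, 1 ≤ t → L t = Fᵀ * W t * F) :
    (∀ t : ℕ, 1 ≤ t → infNorm (Fᵀ * Wstar * F - L (t - 1)) ≤ ζ t →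
        infNorm (Fᵀ * Wstar * F - L t) ≤ ζ t / 5) ∧
      ∀ ε : ℝ, 0 < ε → ∀ T : ℕ,
        ⌈Real.logb 5 (2 * μ ^ 2 * specNorm F ^ 2 * ((d : ℝ) / n) * c_W / ε)⌉₊ + 1 < T →
          infNorm (Fᵀ * Wstar * F - L T) ≤ ε ∧ infNorm (Sstar - S T) ≤ ε := by
  have hσ : ∀ a, σ a ≠ 0 := sigma_ne_zero F U σ V hrk hFsvd
  have hcW0 : 0 ≤ c_W := (specNorm_nonneg Wstar).trans hWb
  have hCnn : 0 ≤ μ ^ 2 * specNorm F ^ 2 * ((d : ℝ) / n) * c_W :=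
    mul_nonneg (mul_nonneg (mul_nonneg (sq_nonneg μ) (sq_nonneg _)) (by positivity)) hcW0
  have hζnn : ∀ t, 0 ≤ ζ t := by
    intro t
    rw [hζ t]
    exact div_nonneg hCnn (by positivity)
  have entry_est : ∀ (B : Matrix (Fin d) (Fin d) ℝ) (i j : Fin n),
      |(Fᵀ * B * F) i j| ≤ specNorm B *
        ((specNorm F * (μ * Real.sqrt ((d:ℝ)/n))) *
          (specNorm F * (μ * Real.sqrt ((d:ℝ)/n)))) := by
    intro B i j
    have hG0 : 0 ≤ μ * Real.sqrt ((d:ℝ)/n) := le_trans (Real.sqrt_nonneg _) (hinc i)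
    have h1 : |(Fᵀ * B * F) i j| ≤ specNorm B *
        (Real.sqrt (∑ k, F k i ^ 2) * Real.sqrt (∑ k, F k j ^ 2)) := by
      rw [FtBF_entry F B i j]
      exact entry_bound B _ _
    refine h1.trans (mul_le_mul_of_nonneg_left ?_ (specNorm_nonneg B))
    exact mul_le_mul (sqrt_col_le F U σ V hU hVo hFsvd hinc hG0 i)
      (sqrt_col_le F U σ V hU hVo hFsvd hinc hG0 j) (Real.sqrt_nonneg _)
      (mul_nonneg (specNorm_nonneg F) hG0)
  have hGG : (specNorm F * (μ * Real.sqrt ((d:ℝ)/n))) *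
        (specNorm F * (μ * Real.sqrt ((d:ℝ)/n)))
      = specNorm F ^ 2 * (μ ^ 2 * ((d:ℝ)/n)) := by
    have e : Real.sqrt ((d:ℝ)/n) * Real.sqrt ((d:ℝ)/n) = (d:ℝ)/n :=
      Real.mul_self_sqrt (by positivity)
    calc (specNorm F * (μ * Real.sqrt ((d:ℝ)/n))) * (specNorm F * (μ * Real.sqrt ((d:ℝ)/n)))
        = specNorm F ^ 2 * (μ ^ 2 * (Real.sqrt ((d:ℝ)/n) * Real.sqrt ((d:ℝ)/n))) := by ring
      _ = specNorm F ^ 2 * (μ ^ 2 * ((d:ℝ)/n)) := by rw [e]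
  -- sparse recovery step
  have sparse : ∀ t : ℕ, 1 ≤ t → infNorm (Fᵀ * Wstar * F - L (t - 1)) ≤ ζ t →
      (∀ i j, |(Sstar - S t) i j| ≤ 2 * ζ t) ∧
        (∀ i j, (Sstar - S t) i j ≠ 0 → Sstar i j ≠ 0) := by
    intro t ht hprev
    have hSt : ∀ i j, S t i j = if ζ t < |(M - L (t-1)) i j| then (M - L (t-1)) i j else 0 := by
      intro i j
      rw [hS t ht]
      rfl
    have he : ∀ i j, |(Fᵀ * Wstar * F - L (t-1)) i j| ≤ ζ t := fun i j =>
      (le_infNorm _ i j).trans hprev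
    have hm : ∀ i j, (M - L (t-1)) i j = Sstar i j + (Fᵀ * Wstar * F - L (t-1)) i j := by
      intro i j
      rw [hM]
      simp only [Matrix.sub_apply, Matrix.add_apply]
      ring
    constructor
    · intro i j
      rw [Matrix.sub_apply, hSt i j]
      by_cases hc : ζ t < |(M - L (t-1)) i j|
      · rw [if_pos hc, hm i j]
        have h1 := he i j
        have h2 : Sstar i j - (Sstar i j + (Fᵀ * Wstar * F - L (t-1)) i j)
            = -((Fᵀ * Wstar * F - L (t-1)) i j) := by ring
        rw [h2, abs_neg]
        linarith [hζnn t]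
      · rw [if_neg hc, sub_zero]
        push_neg at hc
        have h3 := he i j
        have h4 : |Sstar i j| ≤ |(M - L (t-1)) i j| + |(Fᵀ * Wstar * F - L (t-1)) i j| := by
          have e : Sstar i j = (M - L (t-1)) i j - (Fᵀ * Wstar * F - L (t-1)) i j := by
            rw [hm i j]; ring
          rw [e, sub_eq_add_neg]
          exact (abs_add_le _ _).trans (by rw [abs_neg])
        linarith
    · intro i j hne
      rw [Matrix.sub_apply, hSt i j] at hne
      by_cases hc : ζ t < |(M - L (t-1)) i j|
      · intro h0
        rw [hm i j, h0, zero_add] at hc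
        exact absurd (he i j) (not_le.mpr hc)
      · rw [if_neg hc, sub_zero] at hne
        exact hne
  -- one full step
  have step : ∀ t : ℕ, 1 ≤ t → infNorm (Fᵀ * Wstar * F - L (t - 1)) ≤ ζ t →
      infNorm (Fᵀ * Wstar * F - L t) ≤ ζ t / 5 := by
    intro t ht hprev
    obtain ⟨hEb, hEsupp⟩ := sparse t ht hprev
    set E : Matrix (Fin n) (Fin n) ℝ := Sstar - S t with hE
    set Δ : Matrix (Fin d) (Fin d) ℝ := (pinv F)ᵀ * E * pinv F with hΔ
    have hMS : M - S t = Fᵀ * Wstar * F + E := by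
      rw [hE, hM]
      abel
    have hFp : F * pinv F = 1 := F_mul_pinv F U σ V hU hVo hFsvd hσ
    have hFpT : (pinv F)ᵀ * Fᵀ = 1 := by
      rw [← Matrix.transpose_mul, hFp, Matrix.transpose_one]
    have hAeq : (pinv F)ᵀ * (M - S t) * pinv F = Wstar + Δ := by
      rw [hMS, Matrix.mul_add, Matrix.add_mul]
      congr 1
      calc (pinv F)ᵀ * (Fᵀ * Wstar * F) * pinv F
          = ((pinv F)ᵀ * Fᵀ) * Wstar * (F * pinv F) := by simp only [Matrix.mul_assoc]
        _ = Wstar := by rw [hFpT, hFp, Matrix.one_mul, Matrix.mul_one]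
    have htr := hWt t ht
    rw [hAeq] at htr
    have hBA := truncation_bound (Wstar + Δ) (W t) Wstar Δ rfl (le_of_eq hWr) htr
    have hWdiff : specNorm (Wstar - W t) ≤ 2 * specNorm Δ := by
      have e : Wstar - W t = (-(W t - (Wstar + Δ))) + (-Δ) := by abel
      calc specNorm (Wstar - W t) = specNorm ((-(W t - (Wstar + Δ))) + (-Δ)) := by rw [← e]
        _ ≤ specNorm (-(W t - (Wstar + Δ))) + specNorm (-Δ) := specNorm_add_le _ _
        _ = specNorm (W t - (Wstar + Δ)) + specNorm Δ := by rw [specNorm_neg, specNorm_neg]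
        _ ≤ specNorm Δ + specNorm Δ := by linarith
        _ = 2 * specNorm Δ := by ring
    have hdiff : Fᵀ * Wstar * F - L t = Fᵀ * (Wstar - W t) * F := by
      rw [hL t ht, Matrix.mul_sub, Matrix.sub_mul]
    rw [hdiff]
    by_cases hzz : z = 0
    · have hSzero : ∀ i j, Sstar i j = 0 := by
        intro i j
        by_contra h0
        have h1 : 0 < (Finset.univ.filter fun j' => Sstar i j' ≠ 0).card :=
          Finset.card_pos.mpr ⟨j, Finset.mem_filter.mpr ⟨Finset.mem_univ j, h0⟩⟩
        have h2 := hrow i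
        unfold nnzRow at h2
        omega
      have hE0 : E = 0 := by
        ext i j
        simp only [Matrix.zero_apply]
        by_contra h0
        exact (hEsupp i j h0) (hSzero i j)
      have hΔ0 : specNorm Δ = 0 := by
        rw [hΔ, hE0, Matrix.mul_zero, Matrix.zero_mul, specNorm_zero]
      refine infNorm_le _ _ (div_nonneg (hζnn t) (by norm_num)) fun i j => ?_
      have h1 := entry_est (Wstar - W t) i j
      have h2 : specNorm (Wstar - W t) = 0 :=
        le_antisymm (by rw [hΔ0] at hWdiff; linarith) (specNorm_nonneg _)
      rw [h2, zero_mul] at h1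
      exact h1.trans (div_nonneg (hζnn t) (by norm_num))
    · have hz1 : 1 ≤ z := Nat.one_le_iff_ne_zero.mpr hzz
      have hz1' : (1:ℝ) ≤ z := by exact_mod_cast hz1
      have hdnn : (0:ℝ) ≤ 20 * μ ^ 2 * d * κ ^ 2 := by positivity
      have hden : (0:ℝ) < 20 * μ ^ 2 * d * κ ^ 2 := by
        rcases eq_or_lt_of_le hdnn with heq | h
        · exfalso
          rw [← heq, div_zero] at hz
          linarith
        · exact h
      have hd0 : 0 < d := by
        by_contra h
        push_neg at h
        have hd' : (d:ℝ) = 0 := by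
          have : d = 0 := by omega
          simp [this]
        rw [hd'] at hden
        simp at hden
      have hzle : (z:ℝ) * (20 * μ ^ 2 * d * κ ^ 2) ≤ n := (le_div_iff₀ hden).mp hz
      have hn0' : (0:ℝ) < n := by nlinarith
      have hspos := sigmaMin_pos F U σ V hd0 hU hVo hFsvd hσ
      have hErow : ∀ i, ∑ j, |E i j| ≤ (z:ℝ) * (2 * ζ t) := by
        intro i
        have hsub : ∑ j, |E i j|
            = ∑ j ∈ Finset.univ.filter (fun j => Sstar i j ≠ 0), |E i j| := by
          refine (Finset.sum_subset (Finset.filter_subset _ _) ?_).symm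
          intro j _ hj
          simp only [Finset.mem_filter, Finset.mem_univ, true_and, not_not] at hj
          have hEj : E i j = 0 := by
            by_contra h0
            exact (hEsupp i j h0) hj
          rw [hEj, abs_zero]
        rw [hsub]
        have h1 := Finset.sum_le_card_nsmul (Finset.univ.filter (fun j => Sstar i j ≠ 0))
          (fun j => |E i j|) (2 * ζ t) (fun j _ => hEb i j)
        rw [nsmul_eq_mul] at h1
        refine h1.trans ?_
        have h2 : ((Finset.univ.filter (fun j => Sstar i j ≠ 0)).card : ℝ) ≤ z := by
          have h3 := hrow i
          unfold nnzRow at h3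
          exact_mod_cast h3
        exact mul_le_mul_of_nonneg_right h2 (by linarith [hζnn t])
      have hEcol : ∀ j, ∑ i, |E i j| ≤ (z:ℝ) * (2 * ζ t) := by
        intro j
        have hsub : ∑ i, |E i j|
            = ∑ i ∈ Finset.univ.filter (fun i => Sstar i j ≠ 0), |E i j| := by
          refine (Finset.sum_subset (Finset.filter_subset _ _) ?_).symm
          intro i _ hi
          simp only [Finset.mem_filter, Finset.mem_univ, true_and, not_not] at hi
          have hEj : E i j = 0 := by
            by_contra h0
            exact (hEsupp i j h0) hi
          rw [hEj, abs_zero]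
        rw [hsub]
        have h1 := Finset.sum_le_card_nsmul (Finset.univ.filter (fun i => Sstar i j ≠ 0))
          (fun i => |E i j|) (2 * ζ t) (fun i _ => hEb i j)
        rw [nsmul_eq_mul] at h1
        refine h1.trans ?_
        have h2 : ((Finset.univ.filter (fun i => Sstar i j ≠ 0)).card : ℝ) ≤ z := by
          have h3 := hcol j
          unfold nnzCol at h3
          exact_mod_cast h3
        exact mul_le_mul_of_nonneg_right h2 (by linarith [hζnn t])
      have hEspec : specNorm E ≤ (z:ℝ) * (2 * ζ t) :=
        specNorm_le_of_sparse E _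
          (mul_nonneg (Nat.cast_nonneg z) (by linarith [hζnn t])) hErow hEcol
      have hΔspec : specNorm Δ ≤ ((sigmaMin F)⁻¹) ^ 2 * ((z:ℝ) * (2 * ζ t)) := by
        rw [hΔ]
        refine (specNorm_pinv_conj F U σ V hd0 hU hVo hFsvd hσ E).trans ?_
        exact mul_le_mul_of_nonneg_left hEspec (by positivity)
      refine infNorm_le _ _ (div_nonneg (hζnn t) (by norm_num)) fun i j => ?_
      have h1 := entry_est (Wstar - W t) i j
      refine h1.trans ?_
      rw [hGG]
      have hb1 : specNorm (Wstar - W t)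
          ≤ 2 * (((sigmaMin F)⁻¹) ^ 2 * ((z:ℝ) * (2 * ζ t))) := by linarith
      have hGnn : (0:ℝ) ≤ specNorm F ^ 2 * (μ ^ 2 * ((d:ℝ)/n)) := by positivity
      refine (mul_le_mul_of_nonneg_right hb1 hGnn).trans ?_
      have hκsq : κ ^ 2 = specNorm F ^ 2 * ((sigmaMin F)⁻¹) ^ 2 := by
        rw [hκ, div_pow, div_eq_mul_inv, inv_pow]
      have key : (2 * (((sigmaMin F)⁻¹) ^ 2 * ((z:ℝ) * (2 * ζ t))))
            * (specNorm F ^ 2 * (μ ^ 2 * ((d:ℝ)/n)))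
          = (4 * ζ t * z * μ ^ 2 * (d:ℝ) * κ ^ 2) / n := by
        rw [hκsq]
        field_simp
        ring
      rw [key, div_le_div_iff₀ hn0' (by norm_num : (0:ℝ) < 5)]
      calc 4 * ζ t * (z:ℝ) * μ ^ 2 * (d:ℝ) * κ ^ 2 * 5
          = ζ t * ((z:ℝ) * (20 * μ ^ 2 * (d:ℝ) * κ ^ 2)) := by ring
        _ ≤ ζ t * n := mul_le_mul_of_nonneg_left hzle (hζnn t)
  -- base case
  have base : infNorm (Fᵀ * Wstar * F - L 0) ≤ ζ 1 := by
    rw [hL0, sub_zero]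
    refine infNorm_le _ _ (hζnn 1) fun i j => ?_
    have h1 := entry_est Wstar i j
    refine h1.trans ?_
    rw [hGG, hζ 1]
    norm_num
    calc specNorm Wstar * (specNorm F ^ 2 * (μ ^ 2 * ((d:ℝ)/n)))
        ≤ c_W * (specNorm F ^ 2 * (μ ^ 2 * ((d:ℝ)/n))) :=
          mul_le_mul_of_nonneg_right hWb (by positivity)
      _ = μ ^ 2 * specNorm F ^ 2 * ((d:ℝ)/n) * c_W := by ring
  -- induction
  have P : ∀ t : ℕ, infNorm (Fᵀ * Wstar * F - L t) ≤ ζ (t + 1) := by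
    intro t
    induction t with
    | zero => exact base
    | succ k ih =>
      have hk : infNorm (Fᵀ * Wstar * F - L ((k+1) - 1)) ≤ ζ (k+1) := by
        simpa using ih
      have h2 := step (k+1) (by omega) hk
      refine h2.trans (le_of_eq ?_)
      rw [hζ (k+1), hζ (k+2)]
      have e1 : k + 1 - 1 = k := by omega
      have e2 : k + 2 - 1 = k + 1 := by omega
      rw [e1, e2, div_div, ← pow_succ]
  refine ⟨step, ?_⟩
  intro ε hε T hT
  have hT1 : 1 ≤ T := by omega
  have hPT : infNorm (Fᵀ * Wstar * F - L (T-1)) ≤ ζ T := by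
    have h1 := P (T-1)
    have e : T - 1 + 1 = T := by omega
    rwa [e] at h1
  obtain ⟨hSb, -⟩ := sparse T hT1 hPT
  have hSinf : infNorm (Sstar - S T) ≤ 2 * ζ T :=
    infNorm_le _ _ (by linarith [hζnn T]) hSb
  have hζT : ζ T = μ ^ 2 * specNorm F ^ 2 * ((d:ℝ)/n) * c_W / 5 ^ (T-1) := hζ T
  have hmain : 2 * ζ T ≤ ε := by
    set Cr : ℝ := μ ^ 2 * specNorm F ^ 2 * ((d:ℝ)/n) * c_W with hCr
    rcases eq_or_lt_of_le hCnn with h0 | hpos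
    · rw [hζT, ← h0]
      simp
      linarith
    · have harg : 0 < 2 * Cr / ε := by positivity
      have hargeq : 2 * μ ^ 2 * specNorm F ^ 2 * ((d : ℝ) / n) * c_W / ε = 2 * Cr / ε := by
        rw [hCr]; ring
      rw [hargeq] at hT
      have hTc : (⌈Real.logb 5 (2 * Cr / ε)⌉₊ : ℝ) + 1 ≤ (T:ℝ) - 1 := by
        have h1 : ⌈Real.logb 5 (2 * Cr / ε)⌉₊ + 2 ≤ T := by omega
        have h2 : ((⌈Real.logb 5 (2 * Cr / ε)⌉₊ + 2 : ℕ) : ℝ) ≤ (T:ℝ) := Nat.cast_le.mpr h1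
        push_cast at h2
        linarith
      have hx : Real.logb 5 (2 * Cr / ε) ≤ (T:ℝ) - 1 := by
        have := Nat.le_ceil (Real.logb 5 (2 * Cr / ε))
        linarith
      have h5 : 2 * Cr / ε ≤ (5:ℝ) ^ ((T:ℝ) - 1) := by
        have h6 : (5:ℝ) ^ Real.logb 5 (2 * Cr / ε) ≤ (5:ℝ) ^ ((T:ℝ) - 1) :=
          (Real.rpow_le_rpow_left_iff (by norm_num : (1:ℝ) < 5)).mpr hx
        rwa [Real.rpow_logb (by norm_num) (by norm_num) harg] at h6
      have hcast : (5:ℝ) ^ ((T:ℝ) - 1) = (5:ℝ) ^ (T - 1 : ℕ) := by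
        rw [← Real.rpow_natCast 5 (T-1)]
        congr 1
        rw [Nat.cast_sub hT1, Nat.cast_one]
      rw [hcast] at h5
      have hpow : (0:ℝ) < 5 ^ (T-1 : ℕ) := by positivity
      rw [div_le_iff₀ hε] at h5
      rw [hζT]
      rw [show 2 * (Cr / 5 ^ (T-1:ℕ)) = (2 * Cr) / 5 ^ (T-1:ℕ) from by ring, div_le_iff₀ hpow]
      calc 2 * Cr ≤ 5 ^ (T-1:ℕ) * ε := h5
        _ = ε * 5 ^ (T-1:ℕ) := mul_comm _ _
  have hLfin : infNorm (Fᵀ * Wstar * F - L T) ≤ ε := by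
    have h1 := P T
    have h2 : ζ (T+1) ≤ 2 * ζ T := by
      rw [hζ (T+1), hζT]
      simp only [Nat.add_sub_cancel]
      have hT' : (T-1) + 1 = T := by omega
      have hpow : (5:ℝ) ^ T = 5 ^ (T-1:ℕ) * 5 := by
        rw [← pow_succ, hT']
      rw [hpow]
      have h3 : (0:ℝ) < (5:ℝ) ^ (T-1:ℕ) := by positivity
      set A : ℝ := μ ^ 2 * specNorm F ^ 2 * ((d:ℝ)/n) * c_W with hA
      have h4 : A / (5 ^ (T-1:ℕ) * 5) ≤ A / 5 ^ (T-1:ℕ) := by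
        apply div_le_div_of_nonneg_left hCnn h3
        nlinarith
      have h5 : A / 5 ^ (T-1:ℕ) ≤ 2 * (A / 5 ^ (T-1:ℕ)) := by
        have := div_nonneg hCnn h3.le
        linarith
      exact h4.trans h5
    exact h1.trans (h2.trans hmain)
  exact ⟨hLfin, hSinf.trans hmain⟩
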